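/- Let q > 2 be a prime power and let s, t be natural numbers with t ≥ 1 and gcd(s,t) = 1. Then the maximum of Z(f) over all Laurent polynomials f(x,y,z) = A + B·x + C·x^{-1} + D·z + E·x^s·y^t·z with (A,B,C,D,E) ≠ (0,0,0,0,0) equals 2(q−1)^2; equivalently, the minimum distance of the toric code C_{P^{(2,1)}(s,t)} over 𝔽_q is (q−1)^3 − 2(q−1)^2. -/

import Mathlib

/-- `Zf f` is the number of points `(x,y,z) ∈ (Fˣ)³` with `f (x,y,z) = 0`. -/
noncomputable def Zf {F : Type} [Field F] [Fintype F]
    (f : Fˣ × Fˣ × Fˣ → F) : ℕ :=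
  Nat.card {v : Fˣ × Fˣ × Fˣ // f v = 0}

/-- The Laurent polynomial `A + B·x + C·x⁻¹ + D·z + E·x^s·y^t·z` from the
signature-(2,1) polytope `P^{(2,1)}(s,t)`, evaluated on `(Fˣ)³`. -/
def fP21 {F : Type} [Field F] (s t : ℕ) (A B C D E : F)
    (v : Fˣ × Fˣ × Fˣ) : F :=
  A + B * (v.1 : F) + C * ((v.1⁻¹ : Fˣ) : F) + D * (v.2.2 : F) +
    E * (v.1 : F) ^ s * (v.2.1 : F) ^ t * (v.2.2 : F)

lemma crunch {G : Type} [CommGroup G] (x y : G) (m n p q : ℤ) :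
    x ^ m * y ^ n * (x ^ p * y ^ q) = x ^ (m + p) * y ^ (n + q) := by
  rw [mul_mul_mul_comm, ← zpow_add, ← zpow_add]

lemma fiber_card {G : Type} [CommGroup G] [Fintype G] [DecidableEq G] (s t : ℕ)
    (hst : Nat.gcd s t = 1) (c : G) :
    (Finset.univ.filter fun p : G × G => p.1 ^ s * p.2 ^ t = c).card = Fintype.card G := by
  obtain ⟨a, b, hab⟩ : ∃ a b : ℤ, (s : ℤ) * a + (t : ℤ) * b = 1 := by
    refine ⟨Nat.gcdA s t, Nat.gcdB s t, ?_⟩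
    have := Nat.gcd_eq_gcd_ab s t
    rw [hst] at this
    exact_mod_cast this.symm
  symm
  rw [← Finset.card_univ (α := G)]
  refine Finset.card_bij' (fun u _ => (u ^ (t:ℤ) * c ^ a, u ^ (-(s:ℤ)) * c ^ b))
    (fun p _ => p.1 ^ b * p.2 ^ (-a)) ?_ (fun p _ => Finset.mem_univ _) ?_ ?_
  · intro u _
    simp only [Finset.mem_filter, Finset.mem_univ, true_and]
    rw [← zpow_natCast (u ^ (t:ℤ) * c ^ a) s, ← zpow_natCast (u ^ (-(s:ℤ)) * c ^ b) t,
      mul_zpow, mul_zpow, ← zpow_mul, ← zpow_mul, ← zpow_mul, ← zpow_mul, crunch]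
    have h1 : (t:ℤ) * s + (-(s:ℤ)) * t = 0 := by ring
    have h2 : a * (s:ℤ) + b * t = 1 := by linarith
    rw [h1, h2, zpow_zero, one_mul, zpow_one]
  · intro u _
    simp only
    rw [mul_zpow, mul_zpow, ← zpow_mul, ← zpow_mul, ← zpow_mul, ← zpow_mul, crunch]
    have h1 : (t:ℤ) * b + (-(s:ℤ)) * (-a) = 1 := by linarith
    have h2 : a * b + b * (-a) = 0 := by ring
    rw [h1, h2, zpow_zero, mul_one, zpow_one]
  · intro p hp
    simp only [Finset.mem_filter, Finset.mem_univ, true_and] at hp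
    obtain ⟨x, y⟩ := p
    simp only at hp ⊢
    rw [← hp]
    ext
    · simp only
      rw [← zpow_natCast x s, ← zpow_natCast y t, mul_zpow, mul_zpow,
        ← zpow_mul, ← zpow_mul, ← zpow_mul, ← zpow_mul, crunch]
      have h1 : b * (t:ℤ) + (s:ℤ) * a = 1 := by linarith
      have h2 : (-a) * (t:ℤ) + (t:ℤ) * a = 0 := by ring
      rw [h1, h2, zpow_zero, mul_one, zpow_one]
    · simp only
      rw [← zpow_natCast x s, ← zpow_natCast y t, mul_zpow, mul_zpow,
        ← zpow_mul, ← zpow_mul, ← zpow_mul, ← zpow_mul, crunch]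
      have h1 : b * (-(s:ℤ)) + (s:ℤ) * b = 0 := by ring
      have h2 : (-a) * (-(s:ℤ)) + (t:ℤ) * b = 1 := by linarith
      rw [h1, h2, zpow_zero, one_mul, zpow_one]

lemma zcount {F : Type} [Field F] [Fintype F] [DecidableEq F] (a k : F) :
    (Finset.univ.filter fun z : Fˣ => a + k * (z : F) = 0).card =
      if k = 0 then (if a = 0 then Fintype.card Fˣ else 0) else if a = 0 then 0 else 1 := by
  rcases eq_or_ne k 0 with hk | hk
  · subst hk
    rw [if_pos rfl]
    rcases eq_or_ne a 0 with ha | ha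
    · subst ha; simp [Finset.card_univ]
    · simp [ha]
  · rw [if_neg hk]
    rcases eq_or_ne a 0 with ha | ha
    · subst ha
      rw [if_pos rfl]
      rw [Finset.card_eq_zero, Finset.filter_eq_empty_iff]
      intro z _
      simp only [zero_add]
      exact mul_ne_zero hk z.ne_zero
    · rw [if_neg ha]
      rw [Finset.card_eq_one]
      refine ⟨Units.mk0 (-a / k) (by simp [ha, hk]), ?_⟩
      ext z
      simp only [Finset.mem_filter, Finset.mem_univ, true_and, Finset.mem_singleton]
      rw [← Units.val_inj]
      simp only [Units.val_mk0]
      constructor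
      · intro h
        field_simp
        linear_combination h
      · intro h
        rw [h]
        field_simp
        ring

lemma quad_card {F : Type} [Field F] [Fintype F] [DecidableEq F] (a b c : F)
    (h : ¬(a = 0 ∧ b = 0 ∧ c = 0)) :
    (Finset.univ.filter fun x : Fˣ => a + b * (x : F) + c * ((x⁻¹ : Fˣ) : F) = 0).card ≤ 2 := by
  set p : Polynomial F := Polynomial.C c + Polynomial.C a * Polynomial.X +
    Polynomial.C b * Polynomial.X ^ 2 with hp
  have hpne : p ≠ 0 := by
    intro h0
    apply h
    have h0' : ∀ i, p.coeff i = 0 := by intro i; rw [h0]; simp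
    have := h0' 0
    have := h0' 1
    have := h0' 2
    simp [hp, Polynomial.coeff_add, Polynomial.coeff_C] at *
    tauto
  have hdeg : p.natDegree ≤ 2 := by
    rw [hp]; compute_degree
  have hmem : ∀ x : Fˣ, x ∈ (Finset.univ.filter fun x : Fˣ =>
      a + b * (x : F) + c * ((x⁻¹ : Fˣ) : F) = 0) → ((x : F) ∈ p.roots.toFinset) := by
    intro x hx
    simp only [Finset.mem_filter, Finset.mem_univ, true_and] at hx
    rw [Multiset.mem_toFinset, Polynomial.mem_roots hpne]
    have hxne := x.ne_zero
    rw [Units.val_inv_eq_inv_val] at hx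
    show p.eval (x : F) = 0
    simp only [hp, Polynomial.eval_add, Polynomial.eval_mul, Polynomial.eval_C,
      Polynomial.eval_X, Polynomial.eval_pow]
    field_simp at hx
    linear_combination hx
  calc (Finset.univ.filter fun x : Fˣ => a + b * (x : F) + c * ((x⁻¹ : Fˣ) : F) = 0).card
      ≤ p.roots.toFinset.card :=
        Finset.card_le_card_of_injOn (fun x => (x : F)) hmem
          (fun x _ y _ hxy => Units.ext hxy)
    _ ≤ Multiset.card p.roots := Multiset.toFinset_card_le _
    _ ≤ p.natDegree := Polynomial.card_roots' p
    _ ≤ 2 := hdeg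

lemma master {F : Type} [Field F] [Fintype F] [DecidableEq F] (s t : ℕ) (A B C D E : F) :
    Zf (fP21 s t A B C D E) =
      ∑ p : Fˣ × Fˣ, (if D + E * (p.1 : F) ^ s * (p.2 : F) ^ t = 0
        then (if A + B * (p.1 : F) + C * ((p.1⁻¹ : Fˣ) : F) = 0 then Fintype.card Fˣ else 0)
        else (if A + B * (p.1 : F) + C * ((p.1⁻¹ : Fˣ) : F) = 0 then 0 else 1)) := by
  classical
  rw [Zf, Nat.card_eq_fintype_card, Fintype.card_subtype, Finset.card_filter]
  simp only [Fintype.sum_prod_type]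
  refine Finset.sum_congr rfl fun x _ => Finset.sum_congr rfl fun y _ => ?_
  have hring : ∀ z : Fˣ, fP21 s t A B C D E (x, y, z) =
      (A + B * (x : F) + C * ((x⁻¹ : Fˣ) : F)) +
        (D + E * (x : F) ^ s * (y : F) ^ t) * (z : F) := by
    intro z; simp only [fP21]; ring
  simp only [hring]
  rw [← Finset.card_filter, zcount]

lemma ZfDE0 {F : Type} [Field F] [Fintype F] [DecidableEq F] (s t : ℕ) (A B C : F) :
    Zf (fP21 s t A B C 0 0) =
      (Finset.univ.filter fun x : Fˣ => A + B * (x : F) + C * ((x⁻¹ : Fˣ) : F) = 0).card *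
        (Fintype.card Fˣ * Fintype.card Fˣ) := by
  rw [master]
  simp only [zero_mul, zero_add, eq_self_iff_true, if_true]
  rw [Fintype.sum_prod_type]
  have hconst : ∀ x : Fˣ,
      (∑ _y : Fˣ, (if A + B * (x : F) + C * ((x⁻¹ : Fˣ) : F) = 0 then Fintype.card Fˣ else 0)) =
      (if A + B * (x : F) + C * ((x⁻¹ : Fˣ) : F) = 0
        then Fintype.card Fˣ * Fintype.card Fˣ else 0) := by
    intro x
    rw [Finset.sum_const, Finset.card_univ, smul_eq_mul, mul_ite, mul_zero]
  simp only [hconst]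
  rw [← Finset.sum_filter, Finset.sum_const, smul_eq_mul]

lemma upper {F : Type} [Field F] [Fintype F] [DecidableEq F] (s t : ℕ)
    (hst : Nat.gcd s t = 1) (A B C D E : F)
    (hne : ¬(A = 0 ∧ B = 0 ∧ C = 0 ∧ D = 0 ∧ E = 0)) :
    Zf (fP21 s t A B C D E) ≤ 2 * (Fintype.card Fˣ * Fintype.card Fˣ) := by
  set n := Fintype.card Fˣ with hn
  by_cases hDE : D = 0 ∧ E = 0
  · obtain ⟨hD, hE⟩ := hDE
    subst hD; subst hE
    rw [ZfDE0]
    have h2 : (Finset.univ.filter fun x : Fˣ =>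
        A + B * (x : F) + C * ((x⁻¹ : Fˣ) : F) = 0).card ≤ 2 :=
      quad_card A B C (by tauto)
    exact Nat.mul_le_mul_right _ h2
  · rw [master]
    have step1 : ∀ p : Fˣ × Fˣ, p ∈ (Finset.univ : Finset (Fˣ × Fˣ)) →
        (if D + E * (p.1 : F) ^ s * (p.2 : F) ^ t = 0
          then (if A + B * (p.1 : F) + C * ((p.1⁻¹ : Fˣ) : F) = 0 then n else 0)
          else (if A + B * (p.1 : F) + C * ((p.1⁻¹ : Fˣ) : F) = 0 then 0 else 1)) ≤
        ((if (D + E * (p.1 : F) ^ s * (p.2 : F) ^ t = 0 ∧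
            A + B * (p.1 : F) + C * ((p.1⁻¹ : Fˣ) : F) = 0) then n else 0) + 1) := by
      intro p _
      by_cases h1 : D + E * (p.1 : F) ^ s * (p.2 : F) ^ t = 0
      · by_cases h2 : A + B * (p.1 : F) + C * ((p.1⁻¹ : Fˣ) : F) = 0
        · rw [if_pos h1, if_pos h2, if_pos ⟨h1, h2⟩]; omega
        · have hnc : ¬(D + E * (p.1 : F) ^ s * (p.2 : F) ^ t = 0 ∧
              A + B * (p.1 : F) + C * ((p.1⁻¹ : Fˣ) : F) = 0) := fun hc => h2 hc.2
          rw [if_pos h1, if_neg h2, if_neg hnc]; omega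
      · have hnc : ¬(D + E * (p.1 : F) ^ s * (p.2 : F) ^ t = 0 ∧
            A + B * (p.1 : F) + C * ((p.1⁻¹ : Fˣ) : F) = 0) := fun hc => h1 hc.1
        rw [if_neg h1, if_neg hnc]
        by_cases h2 : A + B * (p.1 : F) + C * ((p.1⁻¹ : Fˣ) : F) = 0
        · rw [if_pos h2]; omega
        · rw [if_neg h2]
    refine le_trans (Finset.sum_le_sum step1) ?_
    rw [Finset.sum_add_distrib]
    have e1 : (∑ p : Fˣ × Fˣ, (if (D + E * (p.1 : F) ^ s * (p.2 : F) ^ t = 0 ∧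
        A + B * (p.1 : F) + C * ((p.1⁻¹ : Fˣ) : F) = 0) then n else 0)) =
        (Finset.univ.filter fun p : Fˣ × Fˣ => (D + E * (p.1 : F) ^ s * (p.2 : F) ^ t = 0 ∧
        A + B * (p.1 : F) + C * ((p.1⁻¹ : Fˣ) : F) = 0)).card * n := by
      rw [← Finset.sum_filter, Finset.sum_const, smul_eq_mul]
    have e2 : (∑ _p : Fˣ × Fˣ, 1) = n * n := by
      rw [Finset.sum_const, smul_eq_mul, mul_one, Finset.card_univ, Fintype.card_prod]
    rw [e1, e2]
    have hsub : (Finset.univ.filter fun p : Fˣ × Fˣ =>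
        (D + E * (p.1 : F) ^ s * (p.2 : F) ^ t = 0 ∧
        A + B * (p.1 : F) + C * ((p.1⁻¹ : Fˣ) : F) = 0)) ⊆
        (Finset.univ.filter fun p : Fˣ × Fˣ =>
        D + E * (p.1 : F) ^ s * (p.2 : F) ^ t = 0) := by
      intro p hp
      simp only [Finset.mem_filter] at hp ⊢
      exact ⟨hp.1, hp.2.1⟩
    have hK : (Finset.univ.filter fun p : Fˣ × Fˣ =>
        D + E * (p.1 : F) ^ s * (p.2 : F) ^ t = 0).card ≤ n := by
      rcases eq_or_ne E 0 with hE | hE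
      · have hD : D ≠ 0 := fun hD => hDE ⟨hD, hE⟩
        have : (Finset.univ.filter fun p : Fˣ × Fˣ =>
            D + E * (p.1 : F) ^ s * (p.2 : F) ^ t = 0).card = 0 := by
          rw [Finset.card_eq_zero, Finset.filter_eq_empty_iff]
          intro p _
          simp [hE, hD]
        omega
      · rcases eq_or_ne D 0 with hD | hD
        · subst hD
          have : (Finset.univ.filter fun p : Fˣ × Fˣ =>
              (0:F) + E * (p.1 : F) ^ s * (p.2 : F) ^ t = 0).card = 0 := by
            rw [Finset.card_eq_zero, Finset.filter_eq_empty_iff]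
            intro p _
            simp only [zero_add]
            exact mul_ne_zero (mul_ne_zero hE (pow_ne_zero _ p.1.ne_zero))
              (pow_ne_zero _ p.2.ne_zero)
          omega
        · have hu : (-D / E) ≠ 0 := by
            exact div_ne_zero (neg_ne_zero.2 hD) hE
          have hiff : ∀ p : Fˣ × Fˣ, (D + E * (p.1 : F) ^ s * (p.2 : F) ^ t = 0) ↔
              (p.1 ^ s * p.2 ^ t = Units.mk0 (-D / E) hu) := by
            intro p
            rw [← Units.val_inj, Units.val_mul, Units.val_pow_eq_pow_val,
              Units.val_pow_eq_pow_val, Units.val_mk0]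
            constructor
            · intro h
              field_simp
              linear_combination h
            · intro h
              rw [mul_assoc, h]
              field_simp
              ring
          simp only [hiff]
          rw [fiber_card s t hst]
    have : (Finset.univ.filter fun p : Fˣ × Fˣ =>
        (D + E * (p.1 : F) ^ s * (p.2 : F) ^ t = 0 ∧
        A + B * (p.1 : F) + C * ((p.1⁻¹ : Fˣ) : F) = 0)).card ≤ n :=
      le_trans (Finset.card_le_card hsub) hK
    calc _ ≤ n * n + n * n := by
          exact Nat.add_le_add_right (Nat.mul_le_mul_right _ this) _
      _ = 2 * (n * n) := by ring

lemma mem_max {F : Type} [Field F] [Fintype F] [DecidableEq F] (s t : ℕ)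
    (hq : 2 < Fintype.card F) :
    ∃ A B C D E : F, (A, B, C, D, E) ≠ (0, 0, 0, 0, 0) ∧
      Zf (fP21 s t A B C D E) = 2 * (Fintype.card Fˣ * Fintype.card Fˣ) := by
  have h1 : 1 < Fintype.card Fˣ := by rw [Fintype.card_units]; omega
  obtain ⟨c, hc⟩ := Fintype.exists_ne_of_one_lt_card h1 1
  refine ⟨-(1 + (c : F)), 1, (c : F), 0, 0, ?_, ?_⟩
  · intro h
    exact one_ne_zero (congrArg (fun q => q.2.1) h)
  · rw [ZfDE0]
    have hfil : (Finset.univ.filter fun x : Fˣ =>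
        -(1 + (c : F)) + 1 * (x : F) + (c : F) * ((x⁻¹ : Fˣ) : F) = 0) = {1, c} := by
      ext x
      simp only [Finset.mem_filter, Finset.mem_univ, true_and, Finset.mem_insert,
        Finset.mem_singleton]
      rw [Units.val_inv_eq_inv_val]
      constructor
      · intro h
        have hx : (x : F) ≠ 0 := x.ne_zero
        have key : ((x : F) - 1) * ((x : F) - (c : F)) = 0 := by
          field_simp at h
          linear_combination h
        rcases mul_eq_zero.1 key with h1' | h1'
        · left; apply Units.ext; rw [sub_eq_zero] at h1'; simpa using h1'
        · right; apply Units.ext; rw [sub_eq_zero] at h1'; exact h1'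
      · rintro (rfl | rfl)
        · simp only [Units.val_one, inv_one, mul_one, one_mul]; ring
        · rw [mul_inv_cancel₀ (Units.ne_zero _)]; ring
    rw [hfil]
    rw [Finset.card_insert_of_notMem (by simpa using (Ne.symm hc)), Finset.card_singleton]

/-- The maximum of `Z(f)` over nonzero
`f = A + B·x + C·x⁻¹ + D·z + E·x^s·y^t·z` equals `2(q−1)²`; equivalently the
minimum distance of `C_{P^{(2,1)}(s,t)}` is `(q−1)³ − 2(q−1)²`. -/
theorem stmt11 (F : Type) [Field F] [Fintype F] (s t : ℕ)
    (hq : 2 < Fintype.card F) (ht : 1 ≤ t) (hst : Nat.gcd s t = 1) :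
    IsGreatest {n : ℕ | ∃ A B C D E : F, (A, B, C, D, E) ≠ (0, 0, 0, 0, 0) ∧
        n = Zf (fP21 s t A B C D E)}
      (2 * (Fintype.card F - 1) ^ 2) := by
  classical
  have hcard : Fintype.card Fˣ = Fintype.card F - 1 := Fintype.card_units F
  constructor
  · obtain ⟨A, B, C, D, E, hne, hz⟩ := mem_max (F := F) s t hq
    exact ⟨A, B, C, D, E, hne, by rw [hz, hcard]; ring⟩
  · rintro m ⟨A, B, C, D, E, hne, rfl⟩
    have h' : ¬(A = 0 ∧ B = 0 ∧ C = 0 ∧ D = 0 ∧ E = 0) := by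
      intro ⟨hA, hB, hC, hD, hE⟩
      exact hne (by rw [hA, hB, hC, hD, hE])
    calc Zf (fP21 s t A B C D E) ≤ 2 * (Fintype.card Fˣ * Fintype.card Fˣ) :=
          upper s t hst A B C D E h'
      _ = 2 * (Fintype.card F - 1) ^ 2 := by rw [hcard]; ring
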